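/- Let F ∈ B(A) have closed image. Then F is lower semi-Fredholm with respect to the ideal F if and only if the orthogonal projection onto (Im F)^⊥ belongs to F. -/

import Mathlib

variable {A : Type*}

/-- An orthogonal projection in a C*-algebra. -/
def IsProjectionElem [CStarAlgebra A] (p : A) : Prop := IsSelfAdjoint p ∧ p * p = p

/-- Murray–von Neumann equivalence of projections: `p ∼ q`. -/
def MvNEquiv [CStarAlgebra A] (p q : A) : Prop := ∃ v : A, v * star v = p ∧ star v * v = q

/-- Murray–von Neumann subequivalence `p ⪯ q`: `p` is equivalent to a
subprojection of `q`. -/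
def MvNSubEquiv [CStarAlgebra A] (p q : A) : Prop :=
  ∃ p' : A, IsProjectionElem p' ∧ p' * q = p' ∧ q * p' = p' ∧ MvNEquiv p p'

/-- `a` is invertible up to the pair of projections `(p, q)`. -/
def InvertibleUpTo [CStarAlgebra A] (a p q : A) : Prop :=
  ∃ b : A, (1 - q) * a * (1 - p) * b = 1 - q ∧ b * ((1 - q) * a * (1 - p)) = 1 - p

/-- An ideal of finite type elements in a unital C*-algebra `A`
(Kečkić–Lazović): a selfadjoint (two-sided, complex-linear) ideal possessing an
approximate unit of projections, and such that for any two projections `p, q`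
in the ideal there is `v` with `v v* = q` and `v* v ⊥ p`. -/
structure FiniteTypeIdeal (A : Type*) [CStarAlgebra A] where
  carrier : Set A
  zero_mem : (0 : A) ∈ carrier
  add_mem : ∀ {a b : A}, a ∈ carrier → b ∈ carrier → a + b ∈ carrier
  smul_mem : ∀ (c : ℂ) {a : A}, a ∈ carrier → c • a ∈ carrier
  mul_mem_left : ∀ (a : A) {b : A}, b ∈ carrier → a * b ∈ carrier
  mul_mem_right : ∀ (a : A) {b : A}, b ∈ carrier → b * a ∈ carrier
  star_mem : ∀ {a : A}, a ∈ carrier → star a ∈ carrier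
  approx_unit : ∀ {a : A}, a ∈ carrier → ∀ ε : ℝ, 0 < ε →
    ∃ p ∈ carrier, IsProjectionElem p ∧ ‖a * p - a‖ < ε ∧ ‖p * a - a‖ < ε
  exchange : ∀ {p q : A}, p ∈ carrier → q ∈ carrier →
    IsProjectionElem p → IsProjectionElem q →
    ∃ v : A, v * star v = q ∧ IsProjectionElem (star v * v + p)

variable [CStarAlgebra A]

/-- Upper semi-Fredholm type elements `KΦ₊(A)`. -/
def UpperSemiFredholm (F : FiniteTypeIdeal A) (a : A) : Prop :=
  ∃ p q : A, IsProjectionElem p ∧ IsProjectionElem q ∧ p ∈ F.carrier ∧ InvertibleUpTo a p q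

/-- Lower semi-Fredholm type elements `KΦ₋(A)`. -/
def LowerSemiFredholm (F : FiniteTypeIdeal A) (a : A) : Prop :=
  ∃ p q : A, IsProjectionElem p ∧ IsProjectionElem q ∧ q ∈ F.carrier ∧ InvertibleUpTo a p q

/-- Fredholm type elements `KΦ(A)`. -/
def FredholmType (F : FiniteTypeIdeal A) (a : A) : Prop :=
  ∃ p q : A, IsProjectionElem p ∧ IsProjectionElem q ∧ p ∈ F.carrier ∧ q ∈ F.carrier ∧
    InvertibleUpTo a p q

/-- Upper semi-Weyl type elements `KΦ₊⁻(A)`. -/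
def UpperSemiWeyl (F : FiniteTypeIdeal A) (a : A) : Prop :=
  ∃ p q : A, IsProjectionElem p ∧ IsProjectionElem q ∧ p ∈ F.carrier ∧ MvNSubEquiv p q ∧
    InvertibleUpTo a p q

/-- Lower semi-Weyl type elements `KΦ₋⁺(A)`. -/
def LowerSemiWeyl (F : FiniteTypeIdeal A) (a : A) : Prop :=
  ∃ p q : A, IsProjectionElem p ∧ IsProjectionElem q ∧ q ∈ F.carrier ∧ MvNSubEquiv q p ∧
    InvertibleUpTo a p q

/-- Weyl type elements `KΦ₀(A)`. -/
def WeylType (F : FiniteTypeIdeal A) (a : A) : Prop :=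
  ∃ p q : A, IsProjectionElem p ∧ IsProjectionElem q ∧ p ∈ F.carrier ∧ q ∈ F.carrier ∧
    MvNEquiv p q ∧ InvertibleUpTo a p q

/-- The orthogonal complement of a subset of `A`, viewed as a Hilbert
`A`-module over itself with inner product `⟪x, y⟫ = x* y`. -/
def OrthoComplement (S : Set A) : Set A := {x : A | ∀ n ∈ S, star n * x = 0}

/-- A subset (submodule) of `A` is orthogonally complementable if every element
of `A` decomposes as a sum of an element of `S` and an element of `S^⊥`. -/
def IsOrthoComplementable (S : Set A) : Prop :=
  ∀ x : A, ∃ n ∈ S, ∃ m ∈ OrthoComplement S, x = n + m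

/-- A closed submodule `N` of `A` is (topologically) complementable if there is
a closed submodule `L` with `N ⊓ L = 0` and `N + L = A`. -/
def IsComplementable (N : Submodule Aᵐᵒᵖ A) : Prop :=
  ∃ L : Submodule Aᵐᵒᵖ A, IsClosed (L : Set A) ∧ N ⊓ L = ⊥ ∧ N ⊔ L = ⊤

/-- An orthogonal projection in `B(A)`: an idempotent which is self-adjoint
with respect to the `A`-valued inner product. -/
def IsOrthogonalProjectionOp (P : A →L[Aᵐᵒᵖ] A) : Prop :=
  P * P = P ∧ ∀ x y : A, star (P x) * y = star x * P y

/-- Invertibility of `F ∈ B(A)` up to a pair of projections `(P, Q)`. -/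
def OpInvertibleUpTo (F P Q : A →L[Aᵐᵒᵖ] A) : Prop :=
  ∃ D : A →L[Aᵐᵒᵖ] A,
    (1 - Q) * F * (1 - P) * D = 1 - Q ∧ D * ((1 - Q) * F * (1 - P)) = 1 - P


lemma gap_of_closed_range (a : A)
    (hclosed : IsClosed {x : A | ∃ y : A, a * y = x}) :
    ∃ δ : ℝ, 0 < δ ∧ ∀ t ∈ spectrum ℝ (star a * a), t ≠ 0 → δ ≤ t := by
  have hsa : IsSelfAdjoint (star a * a) := IsSelfAdjoint.star_mul_self a
  let T : A →L[ℂ] A := ContinuousLinearMap.mul ℂ A a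
  have hNset : ((LinearMap.range (T : A →ₗ[ℂ] A) : Submodule ℂ A) : Set A) = {x : A | ∃ y : A, a * y = x} := by
    ext x
    simp [T, LinearMap.mem_range, eq_comm]
  have hNclosed : IsClosed ((LinearMap.range (T : A →ₗ[ℂ] A) : Submodule ℂ A) : Set A) := hNset ▸ hclosed
  have : CompleteSpace (LinearMap.range (T : A →ₗ[ℂ] A) : Submodule ℂ A) := hNclosed.completeSpace_coe
  let T' : A →L[ℂ] (LinearMap.range (T : A →ₗ[ℂ] A) : Submodule ℂ A) :=
    T.codRestrict _ (fun x => LinearMap.mem_range_self _ x)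
  have hsurj : Function.Surjective T' := by
    rintro ⟨x, y, rfl⟩
    exact ⟨y, rfl⟩
  obtain ⟨C, hC, hCle⟩ := T'.exists_preimage_norm_le hsurj
  refine ⟨(2 * C ^ 2)⁻¹, by positivity, fun t ht htne => ?_⟩
  have ht0 : 0 ≤ t := spectrum_star_mul_self_nonneg t ht
  have htpos : 0 < t := lt_of_le_of_ne ht0 (Ne.symm htne)
  set f : ℝ → ℝ := fun s => max 0 (1 - |s - t| * (2 / t)) with hf
  have hfc : Continuous f := by fun_prop
  set x := cfc f (star a * a) with hxdef
  have hxsa : IsSelfAdjoint x := cfc_predicate f (star a * a)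
  -- 1 ≤ ‖x‖
  have hx1 : (1 : ℝ) ≤ ‖x‖ := by
    have h1 := norm_apply_le_norm_cfc f (star a * a) ht hfc.continuousOn hsa
    have : f t = 1 := by simp [hf]
    rw [this] at h1
    simpa using h1
  have hxpos : (0 : ℝ) < ‖x‖ := lt_of_lt_of_le one_pos hx1
  -- pointwise facts about f
  have hfle1 : ∀ s, f s ≤ 1 := by
    intro s
    apply max_le (by norm_num)
    nlinarith [abs_nonneg (s - t), div_nonneg (by norm_num : (0:ℝ) ≤ 2) ht0]
  have hf0 : ∀ s, 0 ≤ f s := fun s => le_max_left _ _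
  have hsupp : ∀ s, f s ≠ 0 → |s - t| < t / 2 := by
    intro s hs
    by_contra hc
    push_neg at hc
    apply hs
    have : 1 - |s - t| * (2 / t) ≤ 0 := by
      rw [sub_nonpos]
      calc (1 : ℝ) = (t / 2) * (2 / t) := by field_simp
      _ ≤ |s - t| * (2 / t) := by gcongr
    simp [hf, max_eq_left this]
  -- ‖a * x‖ ^ 2 ≤ 2 * t
  have hkey : star (a * x) * (a * x) = cfc (fun s => f s * s * f s) (star a * a) := by
    have h1 : cfc (fun s => f s * s * f s) (star a * a)
        = cfc (fun s => f s * s) (star a * a) * cfc f (star a * a) := by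
      rw [← cfc_mul (fun s => f s * s) f (star a * a) (by fun_prop) hfc.continuousOn]
    have h2 : cfc (fun s => f s * s) (star a * a) = cfc f (star a * a) * (star a * a) := by
      rw [cfc_mul f (fun s => s) (star a * a) hfc.continuousOn (by fun_prop), cfc_id' ℝ (star a * a)]
    rw [h1, h2, star_mul, hxsa.star_eq]
    noncomm_ring
  have hax2 : ‖a * x‖ ^ 2 ≤ 2 * t := by
    have hb : ‖cfc (fun s => f s * s * f s) (star a * a)‖ ≤ 2 * t := by
      apply norm_cfc_le (by positivity)
      intro s hs
      have hs0 : 0 ≤ s := spectrum_star_mul_self_nonneg s hs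
      rw [Real.norm_eq_abs, abs_of_nonneg (mul_nonneg (mul_nonneg (hf0 s) hs0) (hf0 s))]
      rcases eq_or_ne (f s) 0 with h | h
      · rw [h]; simp only [zero_mul, mul_zero]; linarith
      · have h3 := hsupp s h
        have h1 := hfle1 s
        have h2 := hf0 s
        have hs32 : s ≤ 3 * t / 2 := by
          have := abs_lt.mp h3
          linarith [this.2]
        have hA : f s * s * f s ≤ s * 1 :=
          mul_le_mul (mul_le_of_le_one_left hs0 h1) h1 h2 hs0
        rw [mul_one] at hA
        linarith
    calc ‖a * x‖ ^ 2 = ‖star (a * x) * (a * x)‖ := by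
          rw [CStarRing.norm_star_mul_self, sq]
    _ ≤ 2 * t := hkey ▸ hb
  -- get good preimage
  obtain ⟨y, hy1, hy2⟩ := hCle ⟨a * x, ⟨x, rfl⟩⟩
  have hy1' : a * y = a * x := congrArg Subtype.val hy1
  have hy2' : ‖y‖ ≤ C * ‖a * x‖ := hy2
  -- k := x - y, a * k = 0
  have hak : a * (x - y) = 0 := by rw [mul_sub, hy1', sub_self]
  have hkh : star (x - y) * (star a * a) * (x - y) = 0 := by
    have : star (x - y) * (star a * a) * (x - y) = star (a * (x - y)) * (a * (x - y)) := by
      rw [star_mul]; noncomm_ring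
    rw [this, hak, star_zero, mul_zero]
  -- x * (x - y) = 0
  have hxk : x * (x - y) = 0 := by
    letI := CStarAlgebra.spectralOrder A
    haveI := CStarAlgebra.spectralOrderedRing A
    have hd : 0 ≤ cfc (fun s => (2 / t) * s - f s * f s) (star a * a) := by
      apply cfc_nonneg
      intro s hs
      have hs0 : 0 ≤ s := spectrum_star_mul_self_nonneg s hs
      rcases eq_or_ne (f s) 0 with h | h
      · rw [h, mul_zero, sub_zero]
        exact mul_nonneg (by positivity) hs0
      · have h3 := hsupp s h
        have h1 := hfle1 s
        have h2 := hf0 s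
        have hs1 : t / 2 < s := by
          have := abs_lt.mp h3
          linarith [this.1]
        have hfs2 : f s * f s ≤ 1 := mul_le_one₀ h1 h2 h1
        have hone : (1 : ℝ) ≤ (2 / t) * s := by
          rw [div_mul_eq_mul_div, le_div_iff₀ htpos]
          linarith
        linarith
    have hdeq : cfc (fun s => (2 / t) * s - f s * f s) (star a * a)
        = (2 / t) • (star a * a) - x * x := by
      rw [cfc_sub _ _ _ (by fun_prop) (by fun_prop),
        cfc_const_mul _ _ _ (by fun_prop), cfc_id' ℝ (star a * a),
        cfc_mul f f _ hfc.continuousOn hfc.continuousOn]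
    rw [hdeq] at hd
    have hconj : 0 ≤ star (x - y) * ((2 / t) • (star a * a) - x * x) * (x - y) :=
      star_left_conjugate_nonneg hd (x - y)
    have hexp : star (x - y) * ((2 / t) • (star a * a) - x * x) * (x - y)
        = - (star (x - y) * (x * x) * (x - y)) := by
      rw [mul_sub (star (x - y)) ((2 / t) • (star a * a)) (x * x), sub_mul, mul_smul_comm, smul_mul_assoc, hkh, smul_zero, zero_sub]
    rw [hexp] at hconj
    have hge : 0 ≤ star (x - y) * (x * x) * (x - y) := by
      have : star (x - y) * (x * x) * (x - y) = star (x * (x - y)) * (x * (x - y)) := by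
        rw [star_mul, hxsa.star_eq]; noncomm_ring
      rw [this]
      exact star_mul_self_nonneg _
    have hzero : star (x * (x - y)) * (x * (x - y)) = 0 := by
      have h0 : star (x - y) * (x * x) * (x - y) = 0 := le_antisymm (neg_nonneg.mp hconj) hge
      have : star (x - y) * (x * x) * (x - y) = star (x * (x - y)) * (x * (x - y)) := by
        rw [star_mul, hxsa.star_eq]; noncomm_ring
      rw [← this, h0]
    exact (CStarRing.star_mul_self_eq_zero_iff _).mp hzero
  -- ‖x‖ ≤ ‖y‖
  have hxy : x * y = x * x := by
    have := hxk
    rw [mul_sub, sub_eq_zero] at this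
    exact this.symm
  have hnx : ‖x‖ * ‖x‖ = ‖x * x‖ := by
    conv_lhs => rw [← CStarRing.norm_star_mul_self (x := x), hxsa.star_eq]
  have hxley : ‖x‖ ≤ ‖y‖ := by
    have h1 : ‖x‖ * ‖x‖ ≤ ‖x‖ * ‖y‖ := by
      rw [hnx, ← hxy]
      exact norm_mul_le x y
    exact le_of_mul_le_mul_left h1 hxpos
  -- conclude
  have h1C : 1 ≤ C * ‖a * x‖ := le_trans (le_trans hx1 hxley) hy2'
  have hfin : 1 ≤ 2 * C ^ 2 * t := by nlinarith [norm_nonneg (a * x)]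
  have h2C : (0:ℝ) < 2 * C ^ 2 := by positivity
  have hmul := mul_le_mul_of_nonneg_left hfin (le_of_lt (inv_pos.mpr h2C))
  rwa [mul_one, inv_mul_cancel_left₀ (ne_of_gt h2C)] at hmul

lemma exists_mp_inverse (a : A)
    (hclosed : IsClosed {x : A | ∃ y : A, a * y = x}) :
    ∃ b : A, a * b * a = a ∧ b * a * b = b ∧ IsSelfAdjoint (a * b) ∧ IsSelfAdjoint (b * a) := by
  obtain ⟨δ, hδ, hgap⟩ := gap_of_closed_range a hclosed
  have hsa : IsSelfAdjoint (star a * a) := .star_mul_self a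
  set f₀ : ℝ → ℝ := fun s => s / max (s * s) (δ * δ) with hf₀
  have hmaxpos : ∀ s : ℝ, 0 < max (s * s) (δ * δ) :=
    fun s => lt_of_lt_of_le (by positivity) (le_max_right _ _)
  have hf₀c : Continuous f₀ :=
    Continuous.div continuous_id (by fun_prop) (fun s => ne_of_gt (hmaxpos s))
  have hval : ∀ s ∈ spectrum ℝ (star a * a), s ≠ 0 → f₀ s * s = 1 := by
    intro s hs hsne
    have hδs := hgap s hs hsne
    have hs0 : 0 < s := lt_of_lt_of_le hδ hδs
    have hmax : max (s * s) (δ * δ) = s * s := max_eq_left (by nlinarith)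
    rw [hf₀]
    simp only
    rw [hmax]
    field_simp
  have hzero : f₀ 0 = 0 := by rw [hf₀]; simp
  set c := cfc f₀ (star a * a) with hc
  have hcsa : IsSelfAdjoint c := cfc_predicate _ _
  have he : cfc (fun s => f₀ s * s) (star a * a) = c * (star a * a) := by
    rw [cfc_mul f₀ (fun s => s) _ hf₀c.continuousOn (by fun_prop), cfc_id' ℝ (star a * a), ← hc]
  have hbae : (c * star a) * a = cfc (fun s => f₀ s * s) (star a * a) := by
    rw [he, mul_assoc]
  have haE : a * cfc (fun s => f₀ s * s) (star a * a) = a := by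
    have hz : cfc (fun s => f₀ s * s) (star a * a) - 1
        = cfc (fun s => f₀ s * s - 1) (star a * a) := by
      rw [cfc_sub _ _ _ (by fun_prop) (by fun_prop), cfc_const 1 _, map_one]
    have hzsa : IsSelfAdjoint (cfc (fun s => f₀ s * s - 1) (star a * a)) := cfc_predicate _ _
    have hkey : star (a * cfc (fun s => f₀ s * s - 1) (star a * a))
        * (a * cfc (fun s => f₀ s * s - 1) (star a * a)) = 0 := by
      have h1 : star (a * cfc (fun s => f₀ s * s - 1) (star a * a))
          * (a * cfc (fun s => f₀ s * s - 1) (star a * a))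
          = cfc (fun s => f₀ s * s - 1) (star a * a) * (star a * a)
            * cfc (fun s => f₀ s * s - 1) (star a * a) := by
        rw [star_mul, hzsa.star_eq]
        noncomm_ring
      have h2 : cfc (fun s => f₀ s * s - 1) (star a * a) * (star a * a)
            * cfc (fun s => f₀ s * s - 1) (star a * a)
          = cfc (fun s => (f₀ s * s - 1) * s * (f₀ s * s - 1)) (star a * a) := by
        rw [show (fun s => (f₀ s * s - 1) * s * (f₀ s * s - 1))
            = fun s => ((f₀ s * s - 1) * s) * (f₀ s * s - 1) from rfl,
          cfc_mul _ _ _ (by fun_prop) (by fun_prop),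
          cfc_mul _ (fun s => s) _ (by fun_prop) (by fun_prop), cfc_id' ℝ (star a * a)]
      have h3 : cfc (fun s => (f₀ s * s - 1) * s * (f₀ s * s - 1)) (star a * a) = 0 := by
        have : (spectrum ℝ (star a * a)).EqOn (fun s => (f₀ s * s - 1) * s * (f₀ s * s - 1))
            (fun _ => (0:ℝ)) := by
          intro s hs
          rcases eq_or_ne s 0 with rfl | hsne
          · simp
          · simp only
            rw [hval s hs hsne, sub_self, zero_mul, zero_mul]
        rw [cfc_congr this, cfc_const 0 _, map_zero]
      rw [h1, h2, h3]
    have haz : a * cfc (fun s => f₀ s * s - 1) (star a * a) = 0 :=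
      (CStarRing.star_mul_self_eq_zero_iff _).mp hkey
    rw [← hz, mul_sub, mul_one, sub_eq_zero] at haz
    exact haz
  refine ⟨c * star a, ?_, ?_, ?_, ?_⟩
  · rw [mul_assoc, hbae, haE]
  · rw [hbae]
    have h4 : cfc (fun s => f₀ s * s) (star a * a) * c
        = cfc (fun s => (f₀ s * s) * f₀ s) (star a * a) := by
      rw [cfc_mul _ f₀ _ (by fun_prop) hf₀c.continuousOn, ← hc]
    have h5 : cfc (fun s => (f₀ s * s) * f₀ s) (star a * a) = c := by
      have : (spectrum ℝ (star a * a)).EqOn (fun s => (f₀ s * s) * f₀ s) f₀ := by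
        intro s hs
        rcases eq_or_ne s 0 with rfl | hsne
        · simp [hzero]
        · simp only
          rw [hval s hs hsne, one_mul]
      rw [cfc_congr this, ← hc]
    rw [← mul_assoc, h4, h5]
  · show star (a * (c * star a)) = a * (c * star a)
    rw [star_mul, star_mul, star_star, hcsa.star_eq, mul_assoc]
  · show star ((c * star a) * a) = (c * star a) * a
    rw [hbae]
    exact (cfc_predicate (fun s : ℝ => f₀ s * s) (star a * a) :
      IsSelfAdjoint (cfc (fun s => f₀ s * s) (star a * a))).star_eq

/-- Lemma `closed` (b): if `F ∈ B(A)` (realized as left multiplication by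
`a ∈ A`) has closed image, then `F` is lower semi-Fredholm with respect to the
ideal `F` of finite type elements iff the orthogonal projection onto
`(Im F)^⊥` belongs to the ideal. -/
theorem lowerSemiFredholm_iff_coker_projection_finite (F : FiniteTypeIdeal A) (a q : A)
    (hclosed : IsClosed {x : A | ∃ y : A, a * y = x})
    (hq : IsProjectionElem q)
    (hcoker : {x : A | q * x = x} = OrthoComplement {x : A | ∃ y : A, a * y = x}) :
    LowerSemiFredholm F a ↔ q ∈ F.carrier := by
  have hfix : ∀ x : A, q * x = x ↔ star a * x = 0 := by
    intro x
    have h1 := Set.ext_iff.mp hcoker x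
    simp only [Set.mem_setOf_eq, OrthoComplement] at h1
    constructor
    · intro hx
      exact (h1.mp hx) a ⟨1, mul_one a⟩
    · intro hx
      apply h1.mpr
      rintro n ⟨y, rfl⟩
      rw [star_mul, mul_assoc, hx, mul_zero]
  have hqa : q * a = 0 := by
    have h1 : star a * q = 0 := (hfix q).mp hq.2
    have h2 := congrArg star h1
    rwa [star_mul, star_star, hq.1.star_eq, star_zero] at h2
  constructor
  · rintro ⟨p', q', hp', hq'proj, hq'F, b, h1, h2⟩
    have hr : (1 - q') * ((1:A) - a * ((1:A) - p') * b) = 0 := by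
      have h3 : (1 - q') * (a * ((1:A) - p') * b) = (1 - q') * a * ((1:A) - p') * b := by
        noncomm_ring
      rw [mul_sub, mul_one, h3, h1, sub_self]
    have hr2 : (1:A) - a * ((1:A) - p') * b = q' * ((1:A) - a * ((1:A) - p') * b) := by
      rw [sub_mul, one_mul, sub_eq_zero] at hr
      exact hr
    have hq0 : q * (a * ((1:A) - p') * b) = 0 := by
      rw [← mul_assoc, ← mul_assoc, hqa, zero_mul, zero_mul]
    have hqr : q = q * (q' * ((1:A) - a * ((1:A) - p') * b)) := by
      calc q = q * (a * ((1:A) - p') * b) + q * ((1:A) - a * ((1:A) - p') * b) := by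
            noncomm_ring
      _ = q * ((1:A) - a * ((1:A) - p') * b) := by rw [hq0, zero_add]
      _ = q * (q' * ((1:A) - a * ((1:A) - p') * b)) := by rw [← hr2]
    rw [hqr]
    exact F.mul_mem_left q (F.mul_mem_right _ hq'F)
  · intro hqF
    obtain ⟨b, hab_a, hbab, hsab, hsba⟩ := exists_mp_inverse a hclosed
    have habab : a * b * (a * b) = a * b := by rw [← mul_assoc, hab_a]
    have hbaba : b * a * (b * a) = b * a := by rw [← mul_assoc, hbab]
    have hP2 : ((1:A) - a * b) * ((1:A) - a * b) = (1:A) - a * b := by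
      rw [mul_sub, mul_one, sub_mul, one_mul, habab, sub_self, sub_zero]
    have hPsa : IsSelfAdjoint ((1:A) - a * b) := (IsSelfAdjoint.one (R := A)).sub hsab
    have hfixP : ∀ x : A, ((1:A) - a * b) * x = x ↔ star a * x = 0 := by
      intro x
      rw [sub_mul, one_mul, sub_eq_self]
      constructor
      · intro hx
        have ha' : star a * (a * b) = star a := by
          conv_lhs => rw [← hsab.star_eq]
          rw [← star_mul, hab_a]
        calc star a * x = star a * (a * b) * x := by rw [ha']
        _ = star a * (a * b * x) := by rw [mul_assoc]
        _ = 0 := by rw [hx, mul_zero]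
      · intro hx
        calc a * b * x = star (a * b) * x := by rw [hsab.star_eq]
        _ = star b * (star a * x) := by rw [star_mul, mul_assoc]
        _ = 0 := by rw [hx, mul_zero]
    have hPq : q = 1 - a * b := by
      have hPfix : ((1:A) - a * b) * q = q := (hfixP q).mpr ((hfix q).mp hq.2)
      have hqfix : q * ((1:A) - a * b) = (1:A) - a * b := (hfix _).mpr ((hfixP _).mp hP2)
      calc q = star q := hq.1.star_eq.symm
      _ = star (((1:A) - a * b) * q) := by rw [hPfix]
      _ = star q * star ((1:A) - a * b) := by rw [star_mul]
      _ = q * ((1:A) - a * b) := by rw [hq.1.star_eq, hPsa.star_eq]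
      _ = 1 - a * b := hqfix
    have h1q : (1:A) - q = a * b := by rw [hPq, sub_sub_cancel]
    have h1p : (1:A) - ((1:A) - b * a) = b * a := sub_sub_cancel 1 (b * a)
    refine ⟨1 - b * a, q, ⟨(IsSelfAdjoint.one (R := A)).sub hsba, ?_⟩, hq, hqF, b, ?_, ?_⟩
    · rw [mul_sub, mul_one, sub_mul, one_mul, hbaba, sub_self, sub_zero]
    · rw [h1q, h1p]
      calc a * b * a * (b * a) * b = a * b * a * (b * a * b) := by noncomm_ring
      _ = a * b := by rw [hbab, hab_a]
    · rw [h1q, h1p]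
      calc b * (a * b * a * (b * a)) = b * a * b * (a * (b * a)) := by noncomm_ring
      _ = b * (a * (b * a)) := by rw [hbab]
      _ = b * a := by rw [← mul_assoc, hbaba]
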